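/- Let (M, L, R, ε) be a G-span from (S, H) to (T, V), and let (id_S, e)_* and (id_T, e)_* be the identity G-spans on (S,H) and (T,V) (apex S resp. T, both legs the identity, ε constant equal to the identity element e of G). Then the matrices satisfy [(id_S,e)_*]·[M,ε] = [M,ε] = [M,ε]·[(id_T,e)_*]. -/

import Mathlib

open CategoryTheory

noncomputable section

/-- The component set `π₀(C)`: isomorphism classes of objects of `C`. -/
abbrev Pi0 (C : Type*) [Category C] := Quotient (isIsomorphicSetoid C)

/-- Groupoid cardinality (Euler characteristic): the sum, over a set of representatives of
the isomorphism classes of objects, of the reciprocals of the orders of the automorphism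
groups. -/
noncomputable def gcard (C : Type*) [Category C] : ℚ :=
  ∑ᶠ x : Pi0 C, (Nat.card (Aut (Quotient.out x)) : ℚ)⁻¹

/-- A functor into the one-object groupoid `BG`, identified with an assignment of elements
of `G` to morphisms (composition goes to multiplication in reverse order, matching the
convention `f ≫ g ↦ g·f` of `BG`). -/
structure GFunctor (S : Type*) [Category S] (G : Type*) [Group G] where
  map : ∀ {a b : S}, (a ⟶ b) → G
  map_id : ∀ a : S, map (𝟙 a) = 1
  map_comp : ∀ {a b c : S} (f : a ⟶ b) (g : b ⟶ c), map (f ≫ g) = map g * map f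

/-- The two-sided homotopy fibre `c\M/d` of a span `S ⟵L M ⟶R T`: objects are triples
`(s, a, t)` with `s : c ⟶ L a` and `t : R a ⟶ d`; morphisms are morphisms `m : a₁ ⟶ a₂`
of `M` with `L m ∘ s₁ = s₂` and `t₂ ∘ R m = t₁`. -/
abbrev TwoFibre {S T M : Type*} [Category S] [Category T] [Category M]
    (L : M ⥤ S) (R : M ⥤ T) (c : S) (d : T) :=
  StructuredArrow c (CostructuredArrow.proj R d ⋙ L)

/-- The induced function `c\ε/d` on the two-sided homotopy fibre:
`(s,a,t) ↦ V(t)·ε(a)·H(s)`. -/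
def twoEps {S T M : Type*} [Category S] [Category T] [Category M]
    {G : Type*} [Group G] (H : GFunctor S G) (V : GFunctor T G)
    (L : M ⥤ S) (R : M ⥤ T) (ε : M → G) {c : S} {d : T}
    (x : TwoFibre L R c d) : G :=
  V.map x.right.hom * ε x.right.left * H.map x.hom

/-- The matrix `[M, ε] : π₀(S) × π₀(T) → ℚG` of a `G`-span:
`[M,ε](c,d) = |Aut_T(d)|⁻¹ · ∑_{g ∈ G} χ((c\M/d){c\ε/d = g}) · g`. -/
noncomputable def spanMatrix {S T M : Type*} [Category S] [Category T] [Category M]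
    {G : Type*} [CommGroup G] [Fintype G]
    (H : GFunctor S G) (V : GFunctor T G)
    (L : M ⥤ S) (R : M ⥤ T) (ε : M → G)
    (c : Pi0 S) (d : Pi0 T) : MonoidAlgebra ℚ G :=
  ∑ g : G, MonoidAlgebra.single g
    ((Nat.card (Aut (Quotient.out d)) : ℚ)⁻¹ *
      gcard (ObjectProperty.FullSubcategory
        (fun x : TwoFibre L R (Quotient.out c) (Quotient.out d) =>
          twoEps H V L R ε x = g)))

/-! ### Auxiliary lemmas -/

noncomputable def autEquivOfFF {C D : Type*} [Category C] [Category D] (F : C ⥤ D)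
    [F.Full] [F.Faithful] (X : C) : Aut X ≃ Aut (F.obj X) where
  toFun i := F.mapIso i
  invFun j := F.preimageIso j
  left_inv i := F.preimageIso_mapIso i
  right_inv j := by ext; simp [Functor.preimageIso]

/-- The map on `π₀` induced by a functor. -/
def pi0Map {C D : Type*} [Category C] [Category D] (F : C ⥤ D) : Pi0 C → Pi0 D :=
  Quotient.lift (fun X => ⟦F.obj X⟧)
    (fun _ _ h => Quotient.sound (h.elim fun i => ⟨F.mapIso i⟩))

lemma gcard_eq_of_equivalence {C D : Type*} [Category C] [Category D] (F : C ⥤ D)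
    [F.IsEquivalence] : gcard C = gcard D := by
  have hinj : Function.Injective (pi0Map F) := by
    rintro ⟨X⟩ ⟨Y⟩ h
    exact Quotient.sound ⟨F.preimageIso (Quotient.exact h).some⟩
  have hsurj : Function.Surjective (pi0Map F) := by
    rintro ⟨Y⟩
    exact ⟨⟦F.objPreimage Y⟧, Quotient.sound ⟨F.objObjPreimageIso Y⟩⟩
  let e : Pi0 C ≃ Pi0 D := Equiv.ofBijective _ ⟨hinj, hsurj⟩
  have key : ∀ x : Pi0 C,
      (Nat.card (Aut (Quotient.out x)) : ℚ)⁻¹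
        = (Nat.card (Aut (Quotient.out (e x))) : ℚ)⁻¹ := by
    intro x
    have h1 : e x = ⟦F.obj (Quotient.out x)⟧ := by
      show pi0Map F x = _
      conv_lhs => rw [← Quotient.out_eq x]
      rfl
    have h2 : IsIsomorphic (Quotient.out (e x)) (F.obj (Quotient.out x)) := by
      have := Quotient.mk_out (s := isIsomorphicSetoid D) (F.obj (Quotient.out x))
      rw [← h1] at this
      exact this
    obtain ⟨j⟩ := h2
    have : Nat.card (Aut (Quotient.out (e x))) = Nat.card (Aut (Quotient.out x)) :=
      Nat.card_congr ((Aut.autMulEquivOfIso j).toEquiv.trans (autEquivOfFF F _).symm)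
    rw [this]
  rw [gcard, gcard, finsum_congr key]
  exact finsum_comp_equiv e (f := fun y => (Nat.card (Aut (Quotient.out y)) : ℚ)⁻¹)

lemma gcard_discrete (α : Type*) [Finite α] : gcard (Discrete α) = Nat.card α := by
  have e : Pi0 (Discrete α) ≃ α := by
    refine ⟨Quotient.lift (fun x => x.as) ?_, fun a => ⟦⟨a⟩⟧, ?_, ?_⟩
    · rintro ⟨x⟩ ⟨y⟩ ⟨i⟩; exact Discrete.eq_of_hom i.hom
    · rintro ⟨x⟩; exact congrArg _ rfl
    · intro a; rfl
  have h1 : ∀ x : Pi0 (Discrete α), (Nat.card (Aut (Quotient.out x)) : ℚ)⁻¹ = 1 := by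
    intro x
    have : Subsingleton (Aut (Quotient.out x)) := by
      constructor; intro i j; ext; apply Subsingleton.elim
    rw [Nat.card_eq_one_iff_unique.mpr ⟨this, ⟨Iso.refl _⟩⟩]; norm_num
  have : Fintype (Pi0 (Discrete α)) := @Fintype.ofFinite _ (Finite.of_equiv α e.symm)
  rw [gcard, finsum_congr h1,
    finsum_eq_finset_sum_of_support_subset _ (s := Finset.univ) (by simp)]
  rw [Finset.sum_const, Finset.card_univ, ← Nat.card_eq_fintype_card, Nat.card_congr e]
  simp

/-- iso in a full subcategory from an iso of underlying objects -/
def fsIso {C : Type*} [Category C] {P : C → Prop} {X Y : ObjectProperty.FullSubcategory P}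
    (i : X.obj ≅ Y.obj) : X ≅ Y :=
  ObjectProperty.isoMk _ i

lemma GFunctor.map_inv {S : Type*} [Groupoid S] {G : Type*} [Group G] (H : GFunctor S G)
    {a b : S} (f : a ⟶ b) : (H.map (Groupoid.inv f) : G) = (H.map f)⁻¹ := by
  refine eq_inv_of_mul_eq_one_right ?_
  rw [← H.map_comp, Groupoid.inv_comp, H.map_id]

section Fib
variable {S T M : Type*} [Groupoid S] [Groupoid T] [Groupoid M]
  {G : Type*} [Group G]
  (H : GFunctor S G) (V : GFunctor T G) (L : M ⥤ S) (R : M ⥤ T) (ε : M → G)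
  {c : S} {d : T}

/-- precomposition with `f : c ⟶ c` -/
def preComp (f : c ⟶ c) (g : G) :
    ObjectProperty.FullSubcategory (fun x : TwoFibre L R c d => twoEps H V L R ε x = g) ⥤
    ObjectProperty.FullSubcategory (fun x : TwoFibre L R c d => twoEps H V L R ε x = g * H.map f) where
  obj y := ⟨StructuredArrow.mk (Y := y.obj.right) (f ≫ y.obj.hom), by
    have hy := y.property
    simp only [twoEps, StructuredArrow.mk_right, StructuredArrow.mk_hom_eq_self] at hy ⊢
    rw [H.map_comp, ← mul_assoc, hy]⟩
  map {y z} m := ObjectProperty.homMk (StructuredArrow.homMk m.hom.right (by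
    have := StructuredArrow.w m.hom
    dsimp at this ⊢
    rw [Category.assoc, this]))
  map_id y := by apply InducedCategory.hom_ext; apply StructuredArrow.hom_ext; rfl
  map_comp m₁ m₂ := by apply InducedCategory.hom_ext; apply StructuredArrow.hom_ext; rfl

instance (f : c ⟶ c) (g : G) : (preComp H V L R ε (d := d) f g).Faithful := by
  constructor
  intro y z m₁ m₂ h
  have h2 : m₁.hom.right = m₂.hom.right := congrArg
    (fun k : ((preComp H V L R ε f g).obj y) ⟶ ((preComp H V L R ε f g).obj z) =>
      k.hom.right) h
  exact InducedCategory.hom_ext (StructuredArrow.hom_ext _ _ h2)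

instance (f : c ⟶ c) (g : G) : (preComp H V L R ε (d := d) f g).Full := by
  constructor
  intro y z k
  refine ⟨ObjectProperty.homMk (StructuredArrow.homMk k.hom.right ?_), ?_⟩
  · have h2 : (f ≫ y.obj.hom) ≫ L.map k.hom.right.left = f ≫ z.obj.hom :=
      StructuredArrow.w k.hom
    rw [Category.assoc] at h2
    exact (cancel_epi f).mp h2
  · apply InducedCategory.hom_ext; apply StructuredArrow.hom_ext; rfl

instance (f : c ⟶ c) (g : G) : (preComp H V L R ε (d := d) f g).EssSurj := by
  constructor
  intro z
  refine ⟨⟨StructuredArrow.mk (Y := z.obj.right) (Groupoid.inv f ≫ z.obj.hom), ?_⟩,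
    ⟨fsIso (StructuredArrow.isoMk (Iso.refl _) ?_)⟩⟩
  · have hz := z.property
    simp only [twoEps, StructuredArrow.mk_right, StructuredArrow.mk_hom_eq_self] at hz ⊢
    rw [H.map_comp, GFunctor.map_inv, ← mul_assoc, hz, mul_inv_cancel_right]
  · show (f ≫ Groupoid.inv f ≫ z.obj.hom) ≫ L.map (𝟙 _) = z.obj.hom
    rw [← Category.assoc, Groupoid.comp_inv, Category.id_comp,
      CategoryTheory.Functor.map_id]
    exact Category.comp_id z.obj.hom

instance (f : c ⟶ c) (g : G) : (preComp H V L R ε (d := d) f g).IsEquivalence := {}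

lemma gcard_fib_mul_H (f : c ⟶ c) (g : G) :
    gcard (ObjectProperty.FullSubcategory (fun x : TwoFibre L R c d => twoEps H V L R ε x = g))
      = gcard (ObjectProperty.FullSubcategory
          (fun x : TwoFibre L R c d => twoEps H V L R ε x = g * H.map f)) :=
  gcard_eq_of_equivalence (preComp H V L R ε f g)

/-- postcomposition with `f : d ⟶ d` -/
def postComp (f : d ⟶ d) (g : G) :
    ObjectProperty.FullSubcategory (fun x : TwoFibre L R c d => twoEps H V L R ε x = g) ⥤
    ObjectProperty.FullSubcategory (fun x : TwoFibre L R c d => twoEps H V L R ε x = V.map f * g) where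
  obj y := ⟨StructuredArrow.mk (Y := CostructuredArrow.mk (y.obj.right.hom ≫ f)) y.obj.hom, by
    have hy := y.property
    show V.map (y.obj.right.hom ≫ f) * ε y.obj.right.left * H.map y.obj.hom = V.map f * g
    simp only [twoEps, StructuredArrow.mk_right, StructuredArrow.mk_hom_eq_self,
      CostructuredArrow.mk_hom_eq_self, CostructuredArrow.mk_left] at hy
    rw [V.map_comp, mul_assoc, mul_assoc, ← mul_assoc (V.map y.obj.right.hom), hy]⟩
  map {y z} m := ObjectProperty.homMk (StructuredArrow.homMk (CostructuredArrow.homMk m.hom.right.left (by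
      have hw : R.map m.hom.right.left ≫ z.obj.right.hom = y.obj.right.hom :=
        CostructuredArrow.w m.hom.right
      show R.map m.hom.right.left ≫ z.obj.right.hom ≫ f = y.obj.right.hom ≫ f
      rw [← Category.assoc, hw]))
    (StructuredArrow.w m.hom))
  map_id y := by
    apply InducedCategory.hom_ext; apply StructuredArrow.hom_ext; apply CostructuredArrow.hom_ext; rfl
  map_comp m₁ m₂ := by
    apply InducedCategory.hom_ext; apply StructuredArrow.hom_ext; apply CostructuredArrow.hom_ext; rfl

instance (f : d ⟶ d) (g : G) : (postComp H V L R ε (c := c) f g).Faithful := by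
  constructor
  intro y z m₁ m₂ h
  have h2 : m₁.hom.right.left = m₂.hom.right.left := congrArg
    (fun k : ((postComp H V L R ε f g).obj y) ⟶ ((postComp H V L R ε f g).obj z) =>
      k.hom.right.left) h
  apply InducedCategory.hom_ext
  apply StructuredArrow.hom_ext
  exact CostructuredArrow.hom_ext _ _ h2

instance (f : d ⟶ d) (g : G) : (postComp H V L R ε (c := c) f g).Full := by
  constructor
  intro y z k
  have hw : R.map k.hom.right.left ≫ z.obj.right.hom ≫ f = y.obj.right.hom ≫ f :=
    CostructuredArrow.w k.hom.right
  erw [← Category.assoc] at hw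
  have hw2 := (cancel_mono f).mp hw
  refine ⟨ObjectProperty.homMk (StructuredArrow.homMk (CostructuredArrow.homMk k.hom.right.left hw2)
    (StructuredArrow.w k.hom)), ?_⟩
  apply InducedCategory.hom_ext; apply StructuredArrow.hom_ext; apply CostructuredArrow.hom_ext; rfl

instance (f : d ⟶ d) (g : G) : (postComp H V L R ε (c := c) f g).EssSurj := by
  constructor
  intro z
  have hz := z.property
  refine ⟨⟨StructuredArrow.mk (Y := CostructuredArrow.mk (z.obj.right.hom ≫ Groupoid.inv f))
      z.obj.hom, ?_⟩,
    ⟨fsIso (StructuredArrow.isoMk (CostructuredArrow.isoMk (Iso.refl _) ?_) ?_)⟩⟩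
  · show V.map (z.obj.right.hom ≫ Groupoid.inv f) * ε z.obj.right.left * H.map z.obj.hom = g
    simp only [twoEps, StructuredArrow.mk_right, StructuredArrow.mk_hom_eq_self,
      CostructuredArrow.mk_hom_eq_self, CostructuredArrow.mk_left] at hz
    rw [V.map_comp, GFunctor.map_inv, mul_assoc, mul_assoc,
      ← mul_assoc (V.map z.obj.right.hom), hz, inv_mul_cancel_left]
  · show R.map (Iso.refl _).hom ≫ z.obj.right.hom = (z.obj.right.hom ≫ Groupoid.inv f) ≫ f
    rw [Category.assoc, Groupoid.inv_comp, Category.comp_id, Iso.refl_hom,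
      CategoryTheory.Functor.map_id, Category.id_comp]
  · show z.obj.hom ≫ L.map (𝟙 _) = z.obj.hom
    rw [CategoryTheory.Functor.map_id]
    exact Category.comp_id z.obj.hom

instance (f : d ⟶ d) (g : G) : (postComp H V L R ε (c := c) f g).IsEquivalence := {}

lemma gcard_fib_mul_V (f : d ⟶ d) (g : G) :
    gcard (ObjectProperty.FullSubcategory (fun x : TwoFibre L R c d => twoEps H V L R ε x = g))
      = gcard (ObjectProperty.FullSubcategory
          (fun x : TwoFibre L R c d => twoEps H V L R ε x = V.map f * g)) :=
  gcard_eq_of_equivalence (postComp H V L R ε f g)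

end Fib
section IdSpan
variable {S : Type*} [Groupoid S] {G : Type*} [Group G]
  (H : GFunctor S G) (c x : S) (g : G)

/-- the identity-span fibre is equivalent to a discrete category of morphisms -/
def idFibFunctor :
    ObjectProperty.FullSubcategory (fun y : TwoFibre (𝟭 S) (𝟭 S) c x =>
      twoEps H H (𝟭 S) (𝟭 S) (fun _ => (1 : G)) y = g) ⥤
    Discrete {f : c ⟶ x // H.map f = g} where
  obj y := Discrete.mk ⟨y.obj.hom ≫ y.obj.right.hom, by
    have hy := y.property
    simp only [twoEps, mul_one] at hy
    refine (H.map_comp _ _).trans ?_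
    exact hy⟩
  map {y z} m := eqToHom (congrArg Discrete.mk (Subtype.ext (by
    show y.obj.hom ≫ y.obj.right.hom = z.obj.hom ≫ z.obj.right.hom
    have h1 : (𝟭 S).map m.hom.right.left ≫ z.obj.right.hom = y.obj.right.hom :=
      CostructuredArrow.w m.hom.right
    have h2 : y.obj.hom ≫ m.hom.right.left = z.obj.hom :=
      StructuredArrow.w m.hom
    rw [← h2, ← h1]
    exact (Category.assoc _ _ _).symm)))
  map_id _ := Subsingleton.elim _ _
  map_comp _ _ := Subsingleton.elim _ _

instance : (idFibFunctor H c x g).Faithful := by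
  constructor
  intro y z m₁ m₂ _
  have w₁ : y.obj.hom ≫ m₁.hom.right.left = z.obj.hom := StructuredArrow.w m₁.hom
  have w₂ : y.obj.hom ≫ m₂.hom.right.left = z.obj.hom := StructuredArrow.w m₂.hom
  apply InducedCategory.hom_ext
  apply StructuredArrow.hom_ext
  apply CostructuredArrow.hom_ext
  exact (cancel_epi y.obj.hom).mp (w₁.trans w₂.symm)

instance : (idFibFunctor H c x g).Full := by
  constructor
  intro y z k
  have hk : y.obj.hom ≫ y.obj.right.hom = z.obj.hom ≫ z.obj.right.hom :=
    congrArg Subtype.val (Discrete.eq_of_hom k)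
  refine ⟨ObjectProperty.homMk (StructuredArrow.homMk (CostructuredArrow.homMk
    (Groupoid.inv y.obj.hom ≫ z.obj.hom) ?_) ?_), Subsingleton.elim _ _⟩
  · show (Groupoid.inv y.obj.hom ≫ z.obj.hom) ≫ z.obj.right.hom = y.obj.right.hom
    exact (Category.assoc _ _ _).trans ((congrArg (Groupoid.inv y.obj.hom ≫ ·) hk.symm).trans
      ((Category.assoc _ _ _).symm.trans ((congrArg (· ≫ y.obj.right.hom)
        (Groupoid.inv_comp _)).trans (Category.id_comp _))))
  · show y.obj.hom ≫ Groupoid.inv y.obj.hom ≫ z.obj.hom = z.obj.hom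
    rw [← Category.assoc, Groupoid.comp_inv, Category.id_comp]

instance : (idFibFunctor H c x g).EssSurj := by
  constructor
  rintro ⟨f, hf⟩
  refine ⟨⟨StructuredArrow.mk (Y := CostructuredArrow.mk (S := 𝟭 S) (Y := c) f) (𝟙 c), ?_⟩,
    ⟨eqToIso (congrArg Discrete.mk (Subtype.ext (Category.id_comp f)))⟩⟩
  show H.map f * (1 : G) * H.map (𝟙 c) = g
  rw [H.map_id, mul_one, mul_one, hf]

instance : (idFibFunctor H c x g).IsEquivalence := {}

lemma gcard_idFib [Finite (c ⟶ x)] :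
    gcard (ObjectProperty.FullSubcategory (fun y : TwoFibre (𝟭 S) (𝟭 S) c x =>
        twoEps H H (𝟭 S) (𝟭 S) (fun _ => (1 : G)) y = g))
      = Nat.card {f : c ⟶ x // H.map f = g} :=
  (gcard_eq_of_equivalence (idFibFunctor H c x g)).trans (gcard_discrete _)

end IdSpan

section Matrix

lemma spanMatrix_mul_single {S T M : Type*} [Groupoid S] [Groupoid T] [Groupoid M]
    {G : Type*} [CommGroup G] [Fintype G]
    (H : GFunctor S G) (V : GFunctor T G) (L : M ⥤ S) (R : M ⥤ T) (ε : M → G)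
    (c : Pi0 S) (d : Pi0 T) (h : G)
    (hfib : ∀ g : G,
      gcard (ObjectProperty.FullSubcategory (fun x : TwoFibre L R (Quotient.out c) (Quotient.out d) =>
        twoEps H V L R ε x = g))
      = gcard (ObjectProperty.FullSubcategory (fun x : TwoFibre L R (Quotient.out c) (Quotient.out d) =>
        twoEps H V L R ε x = g * h))) :
    spanMatrix H V L R ε c d * MonoidAlgebra.single h 1 = spanMatrix H V L R ε c d := by
  rw [spanMatrix, Finset.sum_mul]
  simp only [MonoidAlgebra.single_mul_single, mul_one]
  refine Fintype.sum_equiv (Equiv.mulRight h) _ _ fun g => ?_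
  simp only [Equiv.coe_mulRight]
  rw [hfib g]
  rfl

lemma main_absorb {S : Type*} [Groupoid S] {G : Type*} [CommGroup G] [Fintype G]
    (a : S) [Finite (a ⟶ a)] (ν : (a ⟶ a) → G)
    (P : MonoidAlgebra ℚ G) (hab : ∀ f : a ⟶ a, P * MonoidAlgebra.single (ν f) 1 = P) :
    P * (∑ g : G, MonoidAlgebra.single g
        ((Nat.card (Aut a) : ℚ)⁻¹ * (Nat.card {f : a ⟶ a // ν f = g} : ℚ))) = P := by
  classical
  letI : Fintype (a ⟶ a) := Fintype.ofFinite _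
  have hAut : Nat.card (Aut a) = Fintype.card (a ⟶ a) := by
    rw [← Nat.card_eq_fintype_card]
    exact Nat.card_congr (Groupoid.isoEquivHom a a)
  rw [Finset.mul_sum]
  have key : ∀ g : G, P * MonoidAlgebra.single g
      ((Nat.card (Aut a) : ℚ)⁻¹ * (Nat.card {f : a ⟶ a // ν f = g} : ℚ))
      = ((Nat.card (Aut a) : ℚ)⁻¹ * (Nat.card {f : a ⟶ a // ν f = g} : ℚ)) • P := by
    intro g
    by_cases hg : Nonempty {f : a ⟶ a // ν f = g}
    · obtain ⟨f, hf⟩ := hg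
      have h1 : MonoidAlgebra.single g
          ((Nat.card (Aut a) : ℚ)⁻¹ * (Nat.card {f : a ⟶ a // ν f = g} : ℚ))
          = ((Nat.card (Aut a) : ℚ)⁻¹ * (Nat.card {f : a ⟶ a // ν f = g} : ℚ)) •
              MonoidAlgebra.single g 1 := by
        rw [MonoidAlgebra.smul_single', mul_one]
      have h3 : P * MonoidAlgebra.single g 1 = P := by rw [← hf]; exact hab f
      rw [h1, mul_smul_comm, h3]
    · have h0 : Nat.card {f : a ⟶ a // ν f = g} = 0 :=
        @Nat.card_of_isEmpty _ (not_nonempty_iff.mp hg)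
      rw [h0]
      simp
  rw [Finset.sum_congr rfl (fun g _ => key g), ← Finset.sum_smul]
  have hN : ∀ g : G, (Nat.card {f : a ⟶ a // ν f = g} : ℚ)
      = ((Finset.univ.filter fun f : a ⟶ a => ν f = g).card : ℚ) := by
    intro g
    rw [Nat.card_eq_fintype_card, Fintype.card_subtype]
  have hsum : (∑ g : G,
      (Nat.card (Aut a) : ℚ)⁻¹ * (Nat.card {f : a ⟶ a // ν f = g} : ℚ)) = 1 := by
    rw [← Finset.mul_sum, Finset.sum_congr rfl fun g _ => hN g, ← Nat.cast_sum,
      ← Finset.card_eq_sum_card_fiberwise (fun f _ => Finset.mem_univ (ν f)),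
      Finset.card_univ, ← hAut, inv_mul_cancel₀]
    have h1 : Nonempty (Aut a) := ⟨Iso.refl a⟩
    have h2 : Finite (Aut a) := Finite.of_equiv _ (Groupoid.isoEquivHom a a).symm
    exact_mod_cast Nat.card_pos.ne'
  rw [hsum, one_smul]

lemma idSpanMatrix {S : Type*} [Groupoid S] [∀ a b : S, Finite (a ⟶ b)]
    {G : Type*} [CommGroup G] [Fintype G] (H : GFunctor S G) (c x : Pi0 S) :
    spanMatrix H H (𝟭 S) (𝟭 S) (fun _ => (1 : G)) c x
      = ∑ g : G, MonoidAlgebra.single g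
          ((Nat.card (Aut (Quotient.out x)) : ℚ)⁻¹ *
            (Nat.card {f : Quotient.out c ⟶ Quotient.out x // H.map f = g} : ℚ)) := by
  rw [spanMatrix]
  refine Finset.sum_congr rfl fun g _ => ?_
  rw [gcard_idFib]

lemma idSpanMatrix_zero {S : Type*} [Groupoid S] [∀ a b : S, Finite (a ⟶ b)]
    {G : Type*} [CommGroup G] [Fintype G] (H : GFunctor S G) (c x : Pi0 S) (hx : x ≠ c) :
    spanMatrix H H (𝟭 S) (𝟭 S) (fun _ => (1 : G)) c x = 0 := by
  rw [idSpanMatrix]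
  have he : IsEmpty (Quotient.out c ⟶ Quotient.out x) := by
    constructor
    intro f
    exact hx (Quotient.out_equiv_out.mp ⟨((Groupoid.isoEquivHom _ _).symm f).symm⟩)
  have : ∀ g : G, Nat.card {f : Quotient.out c ⟶ Quotient.out x // H.map f = g} = 0 := by
    intro g
    have : IsEmpty {f : Quotient.out c ⟶ Quotient.out x // H.map f = g} :=
      ⟨fun f => he.false f.1⟩
    exact Nat.card_of_isEmpty
  simp [this]

end Matrix

theorem stmt8 {S T M : Type*} [Groupoid S] [Groupoid T] [Groupoid M]
    [Finite S] [∀ a b : S, Finite (a ⟶ b)]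
    [Finite T] [∀ a b : T, Finite (a ⟶ b)]
    [Finite M] [∀ a b : M, Finite (a ⟶ b)]
    {G : Type*} [CommGroup G] [Fintype G]
    (H : GFunctor S G) (V : GFunctor T G)
    (L : M ⥤ S) (R : M ⥤ T) (ε : M → G)
    (hε : ∀ {a b : M} (m : a ⟶ b), ε b * H.map (L.map m) = V.map (R.map m) * ε a) :
    (∀ (c : Pi0 S) (d : Pi0 T),
        ∑ᶠ x : Pi0 S,
            spanMatrix H V L R ε x d *
              spanMatrix H H (𝟭 S) (𝟭 S) (fun _ => (1 : G)) c x =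
          spanMatrix H V L R ε c d) ∧
      ∀ (c : Pi0 S) (d : Pi0 T),
        ∑ᶠ x : Pi0 T,
            spanMatrix V V (𝟭 T) (𝟭 T) (fun _ => (1 : G)) x d *
              spanMatrix H V L R ε c x =
          spanMatrix H V L R ε c d := by
  refine ⟨fun c d => ?_, fun c d => ?_⟩
  · rw [finsum_eq_single _ c
      (fun x hx => by rw [idSpanMatrix_zero H c x hx, mul_zero])]
    rw [idSpanMatrix H c c]
    exact main_absorb (Quotient.out c) (fun f => H.map f) _
      (fun f => spanMatrix_mul_single H V L R ε c d (H.map f)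
        (fun g => gcard_fib_mul_H H V L R ε f g))
  · rw [finsum_eq_single _ d
      (fun x hx => by rw [idSpanMatrix_zero V x d (Ne.symm hx), zero_mul])]
    rw [idSpanMatrix V d d, mul_comm]
    exact main_absorb (Quotient.out d) (fun f => V.map f) _
      (fun f => spanMatrix_mul_single H V L R ε c d (V.map f)
        (fun g => by
          have h2 := gcard_fib_mul_V H V L R ε (c := Quotient.out c) f g
          rw [mul_comm (V.map f) g] at h2
          exact h2))

end
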